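/- Let A be the 3-dimensional commutative algebra over F (char ≠ 2) with basis {a, b, σ} where a² = a, b² = b, ab = σ + ½(a+b), aσ = bσ = σ² = 0. Let c = ½a + ½b + ½σ. Then c is an idempotent, a − b spans the ½-eigenspace of c, and the Miyamoto involution τ_c (negating the ½-eigenspace of c, fixing Fc ⊕ Fσ) maps a to b. -/

import Mathlib

/-- With `{a,b,σ}` as before and `c = ½a + ½b + ½σ`: `c` is idempotent, `a − b` spans the
½-eigenspace of `c`, and the Miyamoto involution `τ_c` maps `a` to `b`. -/
theorem stmt15 {F A : Type*} [Field F] [NonUnitalNonAssocRing A] [Module F A]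
    [SMulCommClass F A A] [IsScalarTower F A A]
    (hchar : (2 : F) ≠ 0)
    (a b s : A) (hindep : LinearIndependent F ![a, b, s])
    (hspan : Submodule.span F {a, b, s} = ⊤)
    (ha : a * a = a) (hb : b * b = b)
    (hab : a * b = s + (2 : F)⁻¹ • a + (2 : F)⁻¹ • b)
    (hba : b * a = s + (2 : F)⁻¹ • a + (2 : F)⁻¹ • b)
    (has : a * s = 0) (hsa : s * a = 0) (hbs : b * s = 0) (hsb : s * b = 0)
    (hss : s * s = 0)
    (c : A) (hc : c = (2 : F)⁻¹ • a + (2 : F)⁻¹ • b + (2 : F)⁻¹ • s) :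
    c * c = c ∧
    {x : A | c * x = (2 : F)⁻¹ • x} = (Submodule.span F {a - b} : Submodule F A) ∧
    (∀ τ : A →ₗ[F] A,
      (∀ x : A, c * x = x → τ x = x) →
      (∀ x : A, c * x = 0 → τ x = x) →
      (∀ x : A, c * x = (2 : F)⁻¹ • x → τ x = -x) →
      τ a = b) := by
  set k : F := (2 : F)⁻¹ with hk
  have hk0 : k ≠ 0 := inv_ne_zero hchar
  -- key products
  have hca : c * a = (k + k * k) • a + (k * k) • b + k • s := by
    rw [hc]
    simp only [add_mul, smul_mul_assoc, ha, hba, hsa, smul_add, smul_smul, smul_zero]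
    module
  have hcb : c * b = (k * k) • a + (k + k * k) • b + k • s := by
    rw [hc]
    simp only [add_mul, smul_mul_assoc, hb, hab, hsb, smul_add, smul_smul, smul_zero]
    module
  have hcs : c * s = 0 := by
    rw [hc]
    simp only [add_mul, smul_mul_assoc, has, hbs, hss, smul_zero, add_zero]
  have hcc : c * c = c := by
    nth_rewrite 2 [hc]
    rw [mul_add, mul_add, mul_smul_comm, mul_smul_comm, mul_smul_comm, hca, hcb, hcs, hc,
      smul_zero]
    match_scalars <;> simp only [hk] <;> field_simp <;> ring
  have hcab : c * (a - b) = k • (a - b) := by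
    rw [mul_sub, hca, hcb]
    module
  refine ⟨hcc, ?_, ?_⟩
  · ext x
    simp only [Set.mem_setOf_eq, SetLike.mem_coe]
    constructor
    · intro hx
      have hrange : Set.range ![a, b, s] = {a, b, s} := by
        ext y
        simp [Matrix.range_cons, Matrix.range_empty]
        tauto
      have hxmem : x ∈ Submodule.span F (Set.range ![a, b, s]) := by
        rw [hrange, hspan]; trivial
      obtain ⟨g, hg⟩ := (Submodule.mem_span_range_iff_exists_fun F).mp hxmem
      rw [Fin.sum_univ_three] at hg
      simp only [Matrix.cons_val_zero, Matrix.cons_val_one, Matrix.head_cons,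
        Matrix.cons_val_two, Matrix.tail_cons] at hg
      set α := g 0
      set β := g 1
      set γ := g 2
      have hx' : c * (α • a + β • b + γ • s) = k • (α • a + β • b + γ • s) := by
        rw [hg]; exact hx
      rw [mul_add, mul_add, mul_smul_comm, mul_smul_comm, mul_smul_comm, hca, hcb, hcs,
        smul_zero] at hx'
      have hz : ∑ i, (![α * (k + k * k) + β * (k * k) - k * α,
          α * (k * k) + β * (k + k * k) - k * β,
          α * k + β * k - k * γ]) i • ![a, b, s] i = 0 := by
        simp only [Fin.sum_univ_three, Matrix.cons_val_zero, Matrix.cons_val_one,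
          Matrix.head_cons, Matrix.cons_val_two, Matrix.tail_cons]
        linear_combination (norm := module) hx'
      have h0' := Fintype.linearIndependent_iff.mp hindep _ hz
      have e1 := h0' 0
      have e2 := h0' 2
      simp only [Matrix.cons_val_zero, Matrix.cons_val_one, Matrix.head_cons,
        Matrix.cons_val_two, Matrix.tail_cons] at e1 e2
      have hβ : β = -α := by
        have h : (α + β) * (k * k) = 0 := by linear_combination e1
        have h2 := (mul_eq_zero.mp h).resolve_right (mul_ne_zero hk0 hk0)
        linear_combination h2
      have hγ : γ = 0 := by
        have h : k * γ = 0 := by linear_combination -e2 + (by linear_combination hβ : β + α = 0) * k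
        exact (mul_eq_zero.mp h).resolve_left hk0
      refine Submodule.mem_span_singleton.mpr ⟨α, ?_⟩
      rw [← hg, hβ, hγ]
      module
    · intro hx
      obtain ⟨r, hr⟩ := Submodule.mem_span_singleton.mp hx
      rw [← hr, mul_smul_comm, hcab, smul_comm]
  · intro τ h1 h0 hhalf
    have htc : τ c = c := h1 c hcc
    have hts : τ s = s := h0 s hcs
    have htab : τ (a - b) = -(a - b) := hhalf _ hcab
    have hax : a = c + k • (a - b) - k • s := by
      rw [hc]
      match_scalars <;> simp only [hk] <;> field_simp <;> ring
    have hbx : b = c - k • (a - b) - k • s := by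
      rw [hc]
      match_scalars <;> simp only [hk] <;> field_simp <;> ring
    rw [hax, map_sub, map_add, map_smul, map_smul, htc, hts, htab, hc]
    match_scalars <;> simp only [hk] <;> field_simp <;> norm_num
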